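/- Let n ≥ 2 and d ≥ 1 be integers, let p_1 < p_2 < ⋯ denote the primes in increasing order, and let k be the smallest positive integer with p_1·p_2⋯p_k ≥ n^d. Then the EGH matrix M^I_{n,d} (of size (p_1+⋯+p_k) × n) is (d+1)-decodable: for every nonempty set S of at most d+1 of its columns there exists a row having exactly one entry equal to 1 among the columns of S. -/

import Mathlib

/-- A binary matrix (rows indexed by `ρ`, columns by `γ`, with `M r c` meaning the entry
in row `r` and column `c` equals 1) is `d`-decodable if for every nonempty set `S` of at
most `d` columns there exists a row having exactly one entry equal to 1 among the columns
of `S`. -/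
def DDecodable {ρ γ : Type*} (M : ρ → γ → Prop) (d : ℕ) : Prop :=
  ∀ S : Finset γ, S.Nonempty → S.card ≤ d → ∃ r : ρ, ∃! c, c ∈ S ∧ M r c

/-- The EGH matrix `M^I_{n,d}`: rows are indexed by pairs `(j, x)` with `j ∈ {1,…,k}` and
`x ∈ {0,…,p_j − 1}` (so `p_1 + ⋯ + p_k` rows in total), columns by `y ∈ {0,…,n−1}`, and
the entry in row `(j, x)` and column `y` is 1 iff `y + 1 ≡ x (mod p_j)`.  If `k` is the
smallest positive integer with `p_1⋯p_k ≥ n^d` then this matrix is `(d+1)`-decodable. -/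
theorem egh_matrix_succ_decodable (n d k : ℕ) (hn : 2 ≤ n) (hd : 1 ≤ d) (hk : 1 ≤ k)
    (hprod : n ^ d ≤ ∏ j ∈ Finset.range k, Nat.nth Nat.Prime j)
    (hmin : ∀ k', 1 ≤ k' → k' < k →
      ∏ j ∈ Finset.range k', Nat.nth Nat.Prime j < n ^ d) :
    DDecodable
      (fun (r : (j : Fin k) × Fin (Nat.nth Nat.Prime j.val)) (y : Fin n) =>
        ((y : ℕ) + 1) % Nat.nth Nat.Prime r.1.val = (r.2 : ℕ))
      (d + 1) := by
  intro S hS hcard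
  by_contra hcon
  push_neg at hcon
  obtain ⟨y₀, hy₀⟩ := hS
  have hf : ∀ j : Fin k, ∃ y, (y ∈ S ∧
      ((y : ℕ) + 1) % Nat.nth Nat.Prime j.val = ((y₀ : ℕ) + 1) % Nat.nth Nat.Prime j.val)
      ∧ y ≠ y₀ := by
    intro j
    have hp := Nat.prime_nth_prime j.val
    have hlt : ((y₀ : ℕ) + 1) % Nat.nth Nat.Prime j.val < Nat.nth Nat.Prime j.val :=
      Nat.mod_lt _ hp.pos
    have h := hcon ⟨j, ⟨((y₀ : ℕ) + 1) % Nat.nth Nat.Prime j.val, hlt⟩⟩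
    by_contra hno
    push_neg at hno
    exact h ⟨y₀, ⟨hy₀, rfl⟩, fun y hy => hno y hy⟩
  choose f h1 hfne using hf
  have hfS : ∀ j, f j ∈ S := fun j => (h1 j).1
  have hfmod : ∀ j : Fin k, ((f j : ℕ) + 1) % Nat.nth Nat.Prime j.val = ((y₀ : ℕ) + 1) % Nat.nth Nat.Prime j.val := fun j => (h1 j).2
  -- fiberwise decomposition of the prime product
  have hsplit : ∏ j ∈ Finset.range k, Nat.nth Nat.Prime j =
      ∏ y ∈ S.erase y₀, ∏ j ∈ Finset.univ.filter (fun j : Fin k => f j = y),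
        Nat.nth Nat.Prime j.val := by
    rw [Finset.prod_fiberwise_of_maps_to (fun j _ => Finset.mem_erase.mpr ⟨hfne j, hfS j⟩)]
    exact (Fin.prod_univ_eq_prod_range _ k).symm
  have hfiber : ∀ y ∈ S.erase y₀,
      ∏ j ∈ Finset.univ.filter (fun j : Fin k => f j = y),
        Nat.nth Nat.Prime j.val ≤ n - 1 := by
    intro y hy
    obtain ⟨hyne, hyS⟩ := Finset.mem_erase.mp hy
    set m : ℕ := (((y : ℕ) + 1) - ((y₀ : ℕ) + 1)) + (((y₀ : ℕ) + 1) - ((y : ℕ) + 1)) with hm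
    have hvne : (y : ℕ) ≠ (y₀ : ℕ) := fun h => hyne (Fin.ext h)
    have hm0 : m ≠ 0 := by omega
    have hmlt : m ≤ n - 1 := by
      have h1 := y.isLt; have h2 := y₀.isLt; omega
    have hdvd : ∀ j ∈ Finset.univ.filter (fun j : Fin k => f j = y),
        Nat.nth Nat.Prime j.val ∣ m := by
      intro j hj
      have hjy : f j = y := (Finset.mem_filter.mp hj).2
      have hmod := hfmod j
      rw [hjy] at hmod
      set q := Nat.nth Nat.Prime j.val
      have key : ∀ a b : ℕ, a % q = b % q → q ∣ a - b := by
        intro a b hab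
        rcases le_total a b with h | h
        · simp [Nat.sub_eq_zero_of_le h]
        · exact (Nat.modEq_iff_dvd' h).mp (hab.symm : Nat.ModEq q b a)
      exact Nat.dvd_add (key _ _ hmod) (key _ _ hmod.symm)
    -- rewrite as a product over distinct primes
    have hinj : ∀ a ∈ Finset.univ.filter (fun j : Fin k => f j = y),
        ∀ b ∈ Finset.univ.filter (fun j : Fin k => f j = y),
        Nat.nth Nat.Prime a.val = Nat.nth Nat.Prime b.val → a = b := by
      intro a _ b _ hab
      exact Fin.ext (Nat.nth_injective Nat.infinite_setOf_prime hab)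
    have himg : ∏ j ∈ Finset.univ.filter (fun j : Fin k => f j = y),
        Nat.nth Nat.Prime j.val =
        ∏ q ∈ (Finset.univ.filter (fun j : Fin k => f j = y)).image
          (fun j : Fin k => Nat.nth Nat.Prime j.val), q := (Finset.prod_image (f := fun q => q) hinj).symm
    rw [himg]
    have hpdvd : (∏ q ∈ (Finset.univ.filter (fun j : Fin k => f j = y)).image
        (fun j : Fin k => Nat.nth Nat.Prime j.val), q) ∣ m := by
      refine Finset.prod_primes_dvd m ?_ ?_
      · intro q hq
        obtain ⟨j, _, rfl⟩ := Finset.mem_image.mp hq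
        exact (Nat.prime_nth_prime j.val).prime
      · intro q hq
        obtain ⟨j, hj, rfl⟩ := Finset.mem_image.mp hq
        exact hdvd j hj
    exact le_trans (Nat.le_of_dvd (Nat.pos_of_ne_zero hm0) hpdvd) hmlt
  have hcarde : (S.erase y₀).card ≤ d := by
    have := Finset.card_erase_of_mem hy₀
    omega
  have hle : ∏ j ∈ Finset.range k, Nat.nth Nat.Prime j ≤ (n - 1) ^ d := by
    calc ∏ j ∈ Finset.range k, Nat.nth Nat.Prime j
        = ∏ y ∈ S.erase y₀, ∏ j ∈ Finset.univ.filter (fun j : Fin k => f j = y),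
            Nat.nth Nat.Prime j.val := hsplit
      _ ≤ ∏ _y ∈ S.erase y₀, (n - 1) := Finset.prod_le_prod (fun _ _ => Nat.zero_le _) hfiber
      _ = (n - 1) ^ (S.erase y₀).card := by rw [Finset.prod_const]
      _ ≤ (n - 1) ^ d := Nat.pow_le_pow_right (by omega) hcarde
  have hlt : (n - 1) ^ d < n ^ d :=
    Nat.pow_lt_pow_left (by omega) (by omega)
  omega
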